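/- Let Δ be a connected closed orientable d-dimensional pseudomanifold with s facets. Then the number of facets of the symmetric homology polytope P_Δ equals C(2m, m) if s = 2m is even, and equals (2m+1)·C(2m, m) if s = 2m+1 is odd. -/

import Mathlib

open Matrix BigOperators Pointwise

/-- An abstract simplicial complex on vertex set `Fin n`. -/
structure SC (n : ℕ) where
  faces : Finset (Finset (Fin n))
  down_closed : ∀ σ ∈ faces, ∀ τ, τ ⊆ σ → τ.Nonempty → τ ∈ faces
  face_nonempty : ∀ σ ∈ faces, σ.Nonempty

namespace SC

variable {n : ℕ}

/-- `K` is `d`-dimensional. -/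
def dimIs (K : SC n) (d : ℕ) : Prop :=
  (∀ σ ∈ K.faces, σ.card ≤ d + 1) ∧ ∃ σ ∈ K.faces, σ.card = d + 1

/-- `K` is pure of dimension `d`. -/
def pure (K : SC n) (d : ℕ) : Prop :=
  ∀ σ ∈ K.faces, ∃ τ ∈ K.faces, σ ⊆ τ ∧ τ.card = d + 1

/-- The `j`-dimensional faces of `K`. -/
abbrev fdex (K : SC n) (j : ℕ) : Type := {σ : Finset (Fin n) // σ ∈ K.faces ∧ σ.card = j + 1}

end SC

/-- Entry of the simplicial boundary matrix: for a codimension-one subface `τ ⊆ σ`,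
the sign `(-1)^k` where `k` is the position of the vertex removed from `σ`. -/
def bEntry {n : ℕ} (τ σ : Finset (Fin n)) : ℤ :=
  if τ ⊆ σ ∧ σ.card = τ.card + 1 then
    ∑ v ∈ σ \ τ, (-1 : ℤ) ^ ((σ.filter fun w => w < v).card)
  else 0

/-- The boundary matrix from `(j+1)`-dimensional faces to `j`-dimensional faces,
i.e. the boundary map `∂_{j+2}`… no: `K.B j` is the map `∂` whose columns are indexed
by the `(j+1)`-faces; in homological notation `K.B (d-1)` is `∂_d`. -/
def SC.B {n : ℕ} (K : SC n) (j : ℕ) : Matrix (K.fdex j) (K.fdex (j + 1)) ℤ :=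
  fun τ σ => bEntry τ.1 σ.1

/-- Strong connectivity of a `(j+1)`-dimensional pure complex: any two facets are
connected by a chain of facets successively sharing a ridge. -/
def SC.StronglyConnected {n : ℕ} (K : SC n) (j : ℕ) : Prop :=
  ∀ a b : K.fdex (j + 1),
    Relation.ReflTransGen (fun σ σ' : K.fdex (j + 1) => (σ.1 ∩ σ'.1).card = j + 1) a b

/-- the number of facets (of a `(j+1)`-dimensional complex) containing a given ridge -/
def SC.ridgeDeg {n : ℕ} (K : SC n) (j : ℕ) (τ : K.fdex j) : ℕ :=
  (Finset.univ.filter fun σ : K.fdex (j + 1) => τ.1 ⊆ σ.1).card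

section Poly

variable {ι κ : Type*} [Fintype ι] [Fintype κ]

def dot (x y : ι → ℝ) : ℝ := ∑ i, x i * y i

/-- the columns of `A` and their negatives, as real vectors -/
def colsPM (A : Matrix ι κ ℤ) : Set (ι → ℝ) :=
  {x | ∃ j : κ, x = (fun i => (A i j : ℝ)) ∨ x = fun i => -(A i j : ℝ)}

/-- the centrally symmetric polytope `conv [A | -A]` -/
def symPoly (A : Matrix ι κ ℤ) : Set (ι → ℝ) := convexHull ℝ (colsPM A)

def intVec (x : ι → ℝ) : Prop := ∀ i, ∃ z : ℤ, x i = (z : ℝ)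

def latticePts (P : Set (ι → ℝ)) : Set (ι → ℝ) := {x ∈ P | intVec x}

/-- a set is a lattice polytope iff it is the convex hull of its lattice points -/
def IsLatticePolytope (Q : Set (ι → ℝ)) : Prop := Q = convexHull ℝ (latticePts Q)

/-- the polar dual, taken within the linear span of `P` -/
def polarIn (P : Set (ι → ℝ)) : Set (ι → ℝ) :=
  {y | y ∈ Submodule.span ℝ P ∧ ∀ x ∈ P, dot x y ≤ 1}

/-- `P` is reflexive: its polar dual (within the affine hull of `P`) is a lattice polytope -/
def IsReflexive (P : Set (ι → ℝ)) : Prop := IsLatticePolytope (polarIn P)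

/-- every lattice point of the span of `P` is an integer combination of lattice points of `P` -/
def IsSpanning (P : Set (ι → ℝ)) : Prop :=
  ∀ x : ι → ℝ, intVec x → x ∈ Submodule.span ℝ P →
    x ∈ (Submodule.span ℤ (latticePts P) : Set (ι → ℝ))

/-- the integer decomposition property -/
def IsIDP (P : Set (ι → ℝ)) : Prop :=
  ∀ k : ℕ, ∀ x : ι → ℝ, intVec x → x ∈ (k : ℝ) • P →
    ∃ f : Fin k → (ι → ℝ), (∀ i, f i ∈ latticePts P) ∧ x = ∑ i, f i

/-- combinatorial equivalence: an inclusion-order isomorphism between the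
posets of exposed faces -/
def CombEquiv (P : Set (ι → ℝ)) (Q : Set (κ → ℝ)) : Prop :=
  Nonempty ({F : Set (ι → ℝ) // IsExposed ℝ P F} ≃o {F : Set (κ → ℝ) // IsExposed ℝ Q F})

/-- unimodular equivalence: an affine isomorphism between the affine hulls which
matches up the two polytopes and the lattice points of the affine hulls -/
def UniEquiv (P : Set (ι → ℝ)) (Q : Set (κ → ℝ)) : Prop :=
  ∃ f : (ι → ℝ) →ᵃ[ℝ] (κ → ℝ),
    Set.BijOn f (affineSpan ℝ P : Set (ι → ℝ)) (affineSpan ℝ Q : Set (κ → ℝ)) ∧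
    f '' P = Q ∧
    (∀ x ∈ (affineSpan ℝ P : Set (ι → ℝ)), intVec x → intVec (f x)) ∧
    (∀ y ∈ (affineSpan ℝ Q : Set (κ → ℝ)), intVec y →
      ∃ x ∈ (affineSpan ℝ P : Set (ι → ℝ)), intVec x ∧ f x = y)

/-- the facets of a polytope: the maximal proper exposed faces -/
def polyFacets (P : Set (ι → ℝ)) : Set (Set (ι → ℝ)) :=
  {F | IsExposed ℝ P F ∧ F ⊂ P ∧ ∀ G, IsExposed ℝ P G → F ⊆ G → G ⊂ P → G = F}

/-- independence of a set of columns of a rational matrix -/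
def colsIndep (A : Matrix ι κ ℚ) (S : Set κ) : Prop :=
  LinearIndependent ℚ (fun j : S => (fun i => A i (j : κ)))

/-- `S` is a basis of the column matroid `M[A]` -/
def IsBasisSet (A : Matrix ι κ ℚ) (S : Set κ) : Prop :=
  colsIndep A S ∧ ∀ S' : Set κ, S ⊆ S' → colsIndep A S' → S' = S

end Poly

/-- the standard cross-polytope -/
def stdCross (s : ℕ) : Set (Fin s → ℝ) :=
  convexHull ℝ {x | ∃ i : Fin s, x = Pi.single i 1 ∨ x = Pi.single i (-1)}

/-- a signed incidence matrix of the cycle on `n` vertices: column `j` is `e_{j+1} - e_j` -/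
def cycMat (n : ℕ) : Matrix (Fin n) (Fin n) ℤ :=
  fun i j => (if (i : ℕ) = ((j : ℕ) + 1) % n then 1 else 0) - (if i = j then 1 else 0)

/-- a signed incidence matrix of the facet-ridge graph of a `(j+1)`-dimensional
pseudomanifold without boundary: rows are facets, columns are ridges, and the two
facets containing a ridge receive opposite signs. -/
noncomputable def SC.frg {n : ℕ} (K : SC n) (j : ℕ) :
    Matrix (K.fdex (j + 1)) (K.fdex j) ℤ :=
  fun σ τ =>
    if τ.1 ⊆ σ.1 then
      (if ∀ σ' : K.fdex (j + 1), τ.1 ⊆ σ'.1 → σ' ≠ σ →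
          (σ'.1 \ τ.1).min ≤ (σ.1 \ τ.1).min then 1 else -1)
    else 0


section Abstract
variable {ι : Type*} [Fintype ι]

/-- the linear map `t ↦ ∑ t i • w i` -/
noncomputable def combo {s : ℕ} (w : Fin s → (ι → ℝ)) : (Fin s → ℝ) →ₗ[ℝ] (ι → ℝ) where
  toFun t := ∑ i, t i • w i
  map_add' t u := by simp [add_smul, Finset.sum_add_distrib]
  map_smul' r t := by simp [smul_smul, Finset.smul_sum]

lemma combo_single {s : ℕ} (w : Fin s → (ι → ℝ)) (i : Fin s) :
    combo w (Pi.single i 1) = w i := by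
  simp only [combo, LinearMap.coe_mk, AddHom.coe_mk]
  rw [Finset.sum_eq_single i] <;> simp +contextual [Pi.single_apply]

lemma exists_functional {s : ℕ} (w : Fin s → (ι → ℝ))
    (H2 : ∀ t : Fin s → ℝ, ∑ i, t i • w i = 0 → ∀ i k : Fin s, t i = t k)
    (a : Fin s → ℝ) (ha : ∑ i, a i = 0) (hs : 1 ≤ s) :
    ∃ c : (ι → ℝ) →ₗ[ℝ] ℝ, ∀ i, c (w i) = a i := by
  classical
  set φ := combo w with hφ
  set φ' : (Fin s → ℝ) →ₗ[ℝ] ℝ :=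
    { toFun := fun t => ∑ i, t i * a i
      map_add' := fun t u => by simp [add_mul, Finset.sum_add_distrib]
      map_smul' := fun r t => by simp [mul_assoc, Finset.mul_sum] } with hφ'
  have hker : LinearMap.ker φ ≤ LinearMap.ker φ' := by
    intro t ht
    have h0 : ∑ i, t i • w i = 0 := ht
    have hconst : ∀ i, t i = t ⟨0, hs⟩ := fun i => H2 t h0 i ⟨0, hs⟩
    have : φ' t = ∑ i, t ⟨0, hs⟩ * a i := by
      simp only [hφ', LinearMap.coe_mk, AddHom.coe_mk]
      exact Finset.sum_congr rfl fun i _ => by rw [hconst i]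
    simp only [LinearMap.mem_ker, this, ← Finset.mul_sum, ha, mul_zero]
  obtain ⟨q, hq⟩ := Submodule.exists_isCompl (LinearMap.range φ)
  set ψ₀ : (LinearMap.range φ) →ₗ[ℝ] ℝ :=
    (Submodule.liftQ _ φ' hker) ∘ₗ (φ.quotKerEquivRange.symm : _ →ₗ[ℝ] _)
  refine ⟨ψ₀ ∘ₗ (Submodule.linearProjOfIsCompl _ q hq), fun i => ?_⟩
  have hw : w i = φ (Pi.single i 1) := (combo_single w i).symm
  have hmem : w i ∈ LinearMap.range φ := ⟨Pi.single i 1, hw.symm⟩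
  have hproj : (Submodule.linearProjOfIsCompl _ q hq) (w i) = ⟨w i, hmem⟩ :=
    Submodule.linearProjOfIsCompl_apply_left hq ⟨w i, hmem⟩
  have hsymm : φ.quotKerEquivRange.symm ⟨w i, hmem⟩ = Submodule.Quotient.mk (Pi.single i 1) := by
    rw [LinearEquiv.symm_apply_eq]
    exact Subtype.ext (by rw [LinearMap.quotKerEquivRange_apply_mk]; exact hw)
  simp only [LinearMap.comp_apply, hproj, ψ₀, LinearEquiv.coe_coe]
  rw [hsymm, Submodule.liftQ_apply]
  simp only [hφ', LinearMap.coe_mk, AddHom.coe_mk]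
  simp [Pi.single_apply, ite_mul]
end Abstract


open scoped Classical in
/-- admissible sign vectors -/
def Adm {s : ℕ} (a : Fin s → ℝ) : Prop :=
  (∀ i, a i = 1 ∨ a i = -1 ∨ a i = 0) ∧ ∑ i, a i = 0 ∧
    (Finset.univ.filter (fun i => a i = 0)).card ≤ 1

lemma sign_extend {s : ℕ} (M : ℝ) (hM : 0 < M) (v : Fin s → ℝ)
    (hb : ∀ i, |v i| ≤ M) (hsum : ∑ i, v i = 0) :
    ∃ a : Fin s → ℝ, Adm a ∧ ∀ i, (v i = M → a i = 1) ∧ (v i = -M → a i = -1) := by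
  classical
  have hMne : M ≠ -M := by nlinarith
  set A : Finset (Fin s) := Finset.univ.filter (fun i => v i = M) with hA
  set B : Finset (Fin s) := Finset.univ.filter (fun i => v i = -M) with hB
  set Cc : Finset (Fin s) := Finset.univ.filter (fun i => ¬(v i = M ∨ v i = -M)) with hC
  have hdAB : Disjoint A B := by
    rw [Finset.disjoint_left]
    intro i hiA hiB
    rw [hA, Finset.mem_filter] at hiA; rw [hB, Finset.mem_filter] at hiB
    exact hMne (hiA.2 ▸ hiB.2)
  have hdACc : Disjoint A Cc := by
    rw [Finset.disjoint_left]
    intro i hiA hiC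
    rw [hA, Finset.mem_filter] at hiA; rw [hC, Finset.mem_filter] at hiC
    exact hiC.2 (Or.inl hiA.2)
  have hdBCc : Disjoint B Cc := by
    rw [Finset.disjoint_left]
    intro i hiB hiC
    rw [hB, Finset.mem_filter] at hiB; rw [hC, Finset.mem_filter] at hiC
    exact hiC.2 (Or.inr hiB.2)
  have hsplit : ∀ f : Fin s → ℝ,
      ∑ i, f i = ∑ i ∈ A, f i + ∑ i ∈ B, f i + ∑ i ∈ Cc, f i := by
    intro f
    have h1 : A ∪ B = Finset.univ.filter (fun i => v i = M ∨ v i = -M) := by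
      rw [hA, hB, Finset.filter_or]
    rw [← Finset.sum_filter_add_sum_filter_not Finset.univ (fun i => v i = M ∨ v i = -M) f,
      ← h1, Finset.sum_union hdAB, ← hC]
  -- the key integer R with (R:ℝ) * M = ∑ over Cc
  set p := A.card
  set q := B.card
  set tc := Cc.card
  set R : ℤ := (q : ℤ) - p with hR
  have hsumA : ∑ i ∈ A, v i = (p : ℝ) * M := by
    rw [Finset.sum_congr rfl (fun i hi => (Finset.mem_filter.mp hi).2), Finset.sum_const,
      nsmul_eq_mul]
  have hsumB : ∑ i ∈ B, v i = -((q : ℝ) * M) := by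
    rw [Finset.sum_congr rfl (fun i hi => (Finset.mem_filter.mp hi).2), Finset.sum_const,
      nsmul_eq_mul]
    ring
  have hCcsum : ∑ i ∈ Cc, v i = (R : ℝ) * M := by
    have := hsplit v
    rw [hsum, hsumA, hsumB] at this
    push_cast [hR]
    linarith
  have hR0 : tc = 0 → R = 0 := by
    intro h0
    have : Cc = ∅ := Finset.card_eq_zero.mp h0
    have h00 : (R : ℝ) * M = 0 := by rw [← hCcsum, this, Finset.sum_empty]
    rcases mul_eq_zero.mp h00 with h | h
    · exact_mod_cast h
    · exact absurd h (ne_of_gt hM)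
  have hR1 : 1 ≤ tc → (R ≤ (tc:ℤ) - 1 ∧ 1 - (tc:ℤ) ≤ R) := by
    intro hpos
    have hstrict : |∑ i ∈ Cc, v i| < (tc : ℝ) * M := by
      calc |∑ i ∈ Cc, v i| ≤ ∑ i ∈ Cc, |v i| := Finset.abs_sum_le_sum_abs _ _
      _ < ∑ i ∈ Cc, M := by
          apply Finset.sum_lt_sum_of_nonempty (Finset.card_pos.mp hpos)
          intro i hi
          rw [hC, Finset.mem_filter] at hi
          exact lt_of_le_of_ne (hb i) fun h => hi.2 ((abs_eq hM.le).mp h)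
      _ = (tc : ℝ) * M := by rw [Finset.sum_const, nsmul_eq_mul]
    rw [hCcsum, abs_mul, abs_of_pos hM] at hstrict
    have : |(R:ℤ)| < (tc:ℤ) := by exact_mod_cast lt_of_mul_lt_mul_right hstrict hM.le
    rw [abs_lt] at this
    omega
  set n : ℕ := ((tc : ℤ) + R).toNat with hnn
  have hn' : (n : ℤ) = (tc : ℤ) + R := by
    rw [hnn, Int.toNat_of_nonneg]
    rcases Nat.eq_zero_or_pos tc with h0 | hpos
    · have := hR0 h0; omega
    · have := hR1 hpos; omega
  set z : ℕ := n % 2 with hz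
  set k : ℕ := n / 2 with hk
  have hkz : k + z ≤ tc := by
    rcases Nat.eq_zero_or_pos tc with h0 | hpos
    · have := hR0 h0; omega
    · have := hR1 hpos; omega
  obtain ⟨Plus, hPlusSub, hPlusCard⟩ :=
    Finset.exists_subset_card_eq (show k ≤ Cc.card from by omega)
  have hcard1 : (Cc \ Plus).card = tc - k := by rw [Finset.card_sdiff_of_subset hPlusSub, hPlusCard]
  obtain ⟨Zs, hZsSub, hZsCard⟩ :=
    Finset.exists_subset_card_eq (show z ≤ (Cc \ Plus).card from by omega)
  set m : ℕ := ((Cc \ Plus) \ Zs).card with hmm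
  have hm : m + k + z = tc := by
    rw [hmm, Finset.card_sdiff_of_subset hZsSub, hcard1]
    omega
  set a : Fin s → ℝ := fun i =>
    if v i = M then 1 else if v i = -M then -1 else
      if i ∈ Plus then 1 else if i ∈ Zs then 0 else -1 with ha
  have haM : ∀ i, v i = M → a i = 1 := fun i h => by rw [ha]; simp only [if_pos h]
  have haMneg : ∀ i, v i = -M → a i = -1 := fun i h => by
    rw [ha]
    simp only
    rw [if_neg (show ¬ v i = M by rw [h]; exact fun hh => hMne hh.symm), if_pos h]
  have hCca : ∀ i ∈ Cc, a i = (if i ∈ Plus then (1:ℝ) else if i ∈ Zs then 0 else -1) := by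
    intro i hi
    rw [hC, Finset.mem_filter] at hi
    rw [ha]
    simp only
    rw [if_neg (fun h => hi.2 (Or.inl h)), if_neg (fun h => hi.2 (Or.inr h))]
  refine ⟨a, ⟨?_, ?_, ?_⟩, fun i => ⟨haM i, haMneg i⟩⟩
  · intro i
    rw [ha]; simp only
    split_ifs <;> norm_num
  · have e1 : ∑ i ∈ A, a i = (p : ℝ) := by
      rw [Finset.sum_congr rfl (fun i hi => haM i (Finset.mem_filter.mp hi).2),
        Finset.sum_const, nsmul_eq_mul, mul_one]
    have e2 : ∑ i ∈ B, a i = -(q : ℝ) := by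
      rw [Finset.sum_congr rfl (fun i hi => haMneg i (Finset.mem_filter.mp hi).2),
        Finset.sum_const, nsmul_eq_mul]
      ring
    have e3 : ∑ i ∈ Plus, a i = (k : ℝ) := by
      have h3 : ∀ i ∈ Plus, a i = (1:ℝ) := fun i hi => by
        rw [hCca i (hPlusSub hi)]; exact if_pos hi
      rw [Finset.sum_congr rfl h3, Finset.sum_const, nsmul_eq_mul, mul_one, hPlusCard]
    have e4 : ∑ i ∈ Zs, a i = 0 := by
      apply Finset.sum_eq_zero
      intro i hi
      have hi' := hZsSub hi
      rw [Finset.mem_sdiff] at hi'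
      rw [hCca i hi'.1, if_neg hi'.2, if_pos hi]
    have e5 : ∑ i ∈ (Cc \ Plus) \ Zs, a i = -(m : ℝ) := by
      have h5 : ∀ i ∈ (Cc \ Plus) \ Zs, a i = (-1:ℝ) := by
        intro i hi
        rw [Finset.mem_sdiff, Finset.mem_sdiff] at hi
        rw [hCca i hi.1.1, if_neg hi.1.2, if_neg hi.2]
      rw [Finset.sum_congr rfl h5, Finset.sum_const, nsmul_eq_mul, hmm]
      ring
    have e6 : ∑ i ∈ Cc, a i = (k : ℝ) + 0 + -(m:ℝ) := by
      rw [← Finset.sum_sdiff hPlusSub, ← Finset.sum_sdiff hZsSub, e3, e4, e5]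
      ring
    have hint : (p : ℤ) - q + k - m = 0 := by omega
    rw [hsplit a, e1, e2, e6]
    have : ((p : ℤ) : ℝ) - q + k - m = 0 := by exact_mod_cast congrArg (Int.cast : ℤ → ℝ) hint
    push_cast at this ⊢
    linarith
  · have hzero : Finset.univ.filter (fun i => a i = 0) = Zs := by
      ext i
      simp only [Finset.mem_filter, Finset.mem_univ, true_and]
      constructor
      · intro h
        rw [ha] at h
        simp only at h
        split_ifs at h with h1 h2 h3 h4
        · norm_num at h
        · norm_num at h
        · norm_num at h
        · exact h4
        · norm_num at h
      · intro hi
        have hi' := hZsSub hi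
        rw [Finset.mem_sdiff] at hi'
        rw [hCca i hi'.1, if_neg hi'.2, if_pos hi]
    rw [hzero, hZsCard]
    omega

open scoped Classical in
lemma adm_struct {s : ℕ} (a : Fin s → ℝ) (h1 : ∀ i, a i = 1 ∨ a i = -1 ∨ a i = 0) :
    (Finset.univ.filter (fun i => a i = (1:ℝ))).card
      + (Finset.univ.filter (fun i => a i = (-1:ℝ))).card
      + (Finset.univ.filter (fun i => a i = (0:ℝ))).card = s ∧
    ∑ i, a i = ((Finset.univ.filter (fun i => a i = (1:ℝ))).card : ℝ)
      - (Finset.univ.filter (fun i => a i = (-1:ℝ))).card := by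
  classical
  set P := Finset.univ.filter (fun i => a i = (1:ℝ)) with hP
  set N := Finset.univ.filter (fun i => a i = (-1:ℝ)) with hN
  set Z := Finset.univ.filter (fun i => a i = (0:ℝ)) with hZ
  have hdPN : Disjoint P N := by
    rw [Finset.disjoint_left]
    intro i hi hi'
    rw [hP, Finset.mem_filter] at hi; rw [hN, Finset.mem_filter] at hi'
    norm_num [hi.2] at hi'
  have hdPZ : Disjoint P Z := by
    rw [Finset.disjoint_left]
    intro i hi hi'
    rw [hP, Finset.mem_filter] at hi; rw [hZ, Finset.mem_filter] at hi'
    norm_num [hi.2] at hi'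
  have hdNZ : Disjoint N Z := by
    rw [Finset.disjoint_left]
    intro i hi hi'
    rw [hN, Finset.mem_filter] at hi; rw [hZ, Finset.mem_filter] at hi'
    norm_num [hi.2] at hi'
  have hunion : P ∪ N ∪ Z = Finset.univ := by
    ext i
    simp only [Finset.mem_union, hP, hN, hZ, Finset.mem_filter, Finset.mem_univ, true_and,
      iff_true]
    rcases h1 i with h | h | h <;> tauto
  have hdisj : Disjoint (P ∪ N) Z := Finset.disjoint_union_left.mpr ⟨hdPZ, hdNZ⟩
  constructor
  · rw [← Finset.card_union_of_disjoint hdPN, ← Finset.card_union_of_disjoint hdisj, hunion,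
      Finset.card_univ, Fintype.card_fin]
  · rw [← hunion, Finset.sum_union hdisj, Finset.sum_union hdPN]
    have e1 : ∑ i ∈ P, a i = (P.card : ℝ) := by
      rw [Finset.sum_congr rfl (fun i hi => (Finset.mem_filter.mp hi).2), Finset.sum_const,
        nsmul_eq_mul, mul_one]
    have e2 : ∑ i ∈ N, a i = -(N.card : ℝ) := by
      rw [Finset.sum_congr rfl (fun i hi => (Finset.mem_filter.mp hi).2), Finset.sum_const,
        nsmul_eq_mul]
      ring
    have e3 : ∑ i ∈ Z, a i = 0 := Finset.sum_eq_zero fun i hi => (Finset.mem_filter.mp hi).2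
    rw [e1, e2, e3]
    ring

open scoped Classical in
lemma adm_card (s : ℕ) :
    {a : Fin s → ℝ | Adm a}.ncard =
      if s % 2 = 0 then Nat.choose s (s / 2)
      else s * Nat.choose (s - 1) ((s - 1) / 2) := by
  classical
  by_cases hpar : s % 2 = 0
  · rw [if_pos hpar]
    set f : Finset (Fin s) → (Fin s → ℝ) := fun T i => if i ∈ T then 1 else -1 with hf
    set Be : Finset (Finset (Fin s)) := Finset.powersetCard (s/2) Finset.univ with hBe
    have hmemBe : ∀ T, T ∈ Be ↔ T.card = s / 2 := by
      intro T
      rw [hBe, Finset.mem_powersetCard]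
      exact ⟨fun h => h.2, fun h => ⟨Finset.subset_univ _, h⟩⟩
    have hset : {a : Fin s → ℝ | Adm a} = f '' ↑Be := by
      ext a
      simp only [Set.mem_setOf_eq, Set.mem_image, Finset.mem_coe]
      constructor
      · rintro ⟨h1, h2, h3⟩
        obtain ⟨hcard, hsum⟩ := adm_struct a h1
        set P := Finset.univ.filter (fun i => a i = (1:ℝ)) with hP
        set N := Finset.univ.filter (fun i => a i = (-1:ℝ)) with hN
        set Z := Finset.univ.filter (fun i => a i = (0:ℝ)) with hZ
        have hpq : P.card = N.card := by
          rw [h2] at hsum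
          have : (P.card : ℝ) = N.card := by linarith
          exact_mod_cast this
        have hz : Z.card = 0 := by omega
        refine ⟨P, (hmemBe P).mpr (by omega), ?_⟩
        funext i
        rcases h1 i with h | h | h
        · rw [hf]; simp only
          rw [if_pos (by rw [hP, Finset.mem_filter]; exact ⟨Finset.mem_univ _, h⟩), h]
        · rw [hf]; simp only
          rw [if_neg (by rw [hP, Finset.mem_filter]; rintro ⟨-, hh⟩; norm_num [h] at hh), h]
        · exfalso
          have : i ∈ Z := by rw [hZ, Finset.mem_filter]; exact ⟨Finset.mem_univ _, h⟩
          rw [Finset.card_eq_zero.mp hz] at this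
          exact absurd this (Finset.notMem_empty i)
      · rintro ⟨T, hT, rfl⟩
        rw [hmemBe] at hT
        have hval : ∀ i, f T i = 1 ∨ f T i = -1 ∨ f T i = 0 := fun i => by
          rw [hf]; simp only; split_ifs <;> norm_num
        obtain ⟨hcard, hsum⟩ := adm_struct (f T) hval
        have hPT : Finset.univ.filter (fun i => f T i = (1:ℝ)) = T := by
          ext i
          simp only [Finset.mem_filter, Finset.mem_univ, true_and, hf]
          split_ifs with h
          · simp [h]
          · exact iff_of_false (by norm_num) h
        have hZT : Finset.univ.filter (fun i => f T i = (0:ℝ)) = ∅ := by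
          ext i
          simp only [Finset.mem_filter, Finset.mem_univ, true_and, hf,
            Finset.notMem_empty, iff_false]
          split_ifs <;> norm_num
        refine ⟨hval, ?_, ?_⟩
        · rw [hsum, hPT, hT]
          rw [hPT, hZT, hT, Finset.card_empty] at hcard
          have : (Finset.univ.filter (fun i => f T i = (-1:ℝ))).card = s / 2 := by omega
          rw [this]
          ring
        · rw [hZT]
          simp
    rw [hset, Set.ncard_image_of_injOn, Set.ncard_coe_finset, hBe, Finset.card_powersetCard,
      Finset.card_univ, Fintype.card_fin]
    · intro T _ T' _ hTT'
      ext i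
      have hi := congrFun hTT' i
      rw [hf] at hi
      simp only at hi
      constructor
      · intro h
        rw [if_pos h] at hi
        by_contra h'
        rw [if_neg h'] at hi
        norm_num at hi
      · intro h
        rw [if_pos h] at hi
        by_contra h'
        rw [if_neg h'] at hi
        norm_num at hi
  · rw [if_neg hpar]
    set m := (s-1)/2 with hm
    set B := (Finset.univ : Finset (Fin s)).sigma
      (fun k => (Finset.univ.erase k).powersetCard m) with hBdef
    set g : (Σ _ : Fin s, Finset (Fin s)) → (Fin s → ℝ) :=
      fun kT i => if i = kT.1 then 0 else if i ∈ kT.2 then 1 else -1 with hg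
    have hmemB : ∀ kT : (Σ _ : Fin s, Finset (Fin s)),
        kT ∈ B ↔ kT.2 ⊆ Finset.univ.erase kT.1 ∧ kT.2.card = m := by
      intro kT
      rw [hBdef]
      cases kT with
      | mk k T => simp [Finset.mem_sigma, Finset.mem_powersetCard]
    have hset : {a : Fin s → ℝ | Adm a} = g '' ↑B := by
      ext a
      simp only [Set.mem_setOf_eq, Set.mem_image, Finset.mem_coe]
      constructor
      · rintro ⟨h1, h2, h3⟩
        obtain ⟨hcard, hsum⟩ := adm_struct a h1
        set P := Finset.univ.filter (fun i => a i = (1:ℝ)) with hP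
        set N := Finset.univ.filter (fun i => a i = (-1:ℝ)) with hN
        set Z := Finset.univ.filter (fun i => a i = (0:ℝ)) with hZ
        have hpq : P.card = N.card := by
          rw [h2] at hsum
          have : (P.card : ℝ) = N.card := by linarith
          exact_mod_cast this
        have hz : Z.card = 1 := by omega
        obtain ⟨k, hk⟩ := Finset.card_eq_one.mp hz
        have hak : a k = 0 := by
          have : k ∈ Z := hk ▸ Finset.mem_singleton_self k
          rw [hZ, Finset.mem_filter] at this
          exact this.2
        refine ⟨⟨k, P⟩, ?_, ?_⟩
        · rw [hmemB]
          constructor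
          · intro i hi
            rw [hP, Finset.mem_filter] at hi
            rw [Finset.mem_erase]
            exact ⟨fun hik => by rw [hik, hak] at hi; norm_num at hi, Finset.mem_univ _⟩
          · simp only
            omega
        · funext i
          rw [hg]
          simp only
          by_cases hik : i = k
          · rw [if_pos hik, hik, hak]
          · rw [if_neg hik]
            rcases h1 i with h | h | h
            · rw [if_pos (by rw [hP, Finset.mem_filter]; exact ⟨Finset.mem_univ _, h⟩), h]
            · rw [if_neg (by rw [hP, Finset.mem_filter]; rintro ⟨-, hh⟩; norm_num [h] at hh), h]
            · exfalso
              have : i ∈ Z := by rw [hZ, Finset.mem_filter]; exact ⟨Finset.mem_univ _, h⟩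
              rw [hk, Finset.mem_singleton] at this
              exact hik this
      · rintro ⟨⟨k, T⟩, hmem, rfl⟩
        rw [hmemB] at hmem
        obtain ⟨hsub, hTcard⟩ := hmem
        simp only at hsub hTcard
        have hkT : k ∉ T := fun h => by
          have := hsub h
          rw [Finset.mem_erase] at this
          exact this.1 rfl
        have hval : ∀ i, g ⟨k, T⟩ i = 1 ∨ g ⟨k, T⟩ i = -1 ∨ g ⟨k, T⟩ i = 0 := fun i => by
          rw [hg]; simp only; split_ifs <;> norm_num
        obtain ⟨hcard, hsum⟩ := adm_struct (g ⟨k, T⟩) hval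
        have hPT : Finset.univ.filter (fun i => g ⟨k, T⟩ i = (1:ℝ)) = T := by
          ext i
          simp only [Finset.mem_filter, Finset.mem_univ, true_and, hg]
          split_ifs with h h'
          · subst h; simp [hkT]
          · simp [h']
          · exact iff_of_false (by norm_num) h'
        have hZT : Finset.univ.filter (fun i => g ⟨k, T⟩ i = (0:ℝ)) = {k} := by
          ext i
          simp only [Finset.mem_filter, Finset.mem_univ, true_and, hg, Finset.mem_singleton]
          split_ifs with h h'
          · simp [h]
          · exact iff_of_false (by norm_num) h
          · exact iff_of_false (by norm_num) h
        refine ⟨hval, ?_, ?_⟩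
        · rw [hsum, hPT, hTcard]
          rw [hPT, hZT, hTcard, Finset.card_singleton] at hcard
          have : (Finset.univ.filter (fun i => g ⟨k, T⟩ i = (-1:ℝ))).card = m := by omega
          rw [this]
          ring
        · rw [hZT]
          simp
    rw [hset, Set.ncard_image_of_injOn, Set.ncard_coe_finset, hBdef, Finset.card_sigma]
    · have : ∀ k : Fin s, ((Finset.univ.erase k).powersetCard m).card
          = Nat.choose (s - 1) m := fun k => by
        rw [Finset.card_powersetCard, Finset.card_erase_of_mem (Finset.mem_univ _),
          Finset.card_univ, Fintype.card_fin]
      rw [Finset.sum_congr rfl fun k _ => this k, Finset.sum_const, Finset.card_univ,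
        Fintype.card_fin, smul_eq_mul]
    · rintro ⟨k, T⟩ hmem ⟨k', T'⟩ hmem' heq
      rw [Finset.mem_coe, hmemB] at hmem hmem'
      have hkk' : k = k' := by
        by_contra hne
        have := congrFun heq k'
        rw [hg] at this
        simp only at this
        rw [if_neg (show k' ≠ k from Ne.symm hne), if_pos trivial] at this
        split_ifs at this <;> norm_num at this
      subst hkk'
      have hTT' : T = T' := by
        ext i
        by_cases hik : i = k
        · subst hik
          constructor
          · intro h
            exact absurd (hmem.1 h) (by rw [Finset.mem_erase]; rintro ⟨h', -⟩; exact h' rfl)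
          · intro h
            exact absurd (hmem'.1 h) (by rw [Finset.mem_erase]; rintro ⟨h', -⟩; exact h' rfl)
        · have := congrFun heq i
          rw [hg] at this
          simp only [if_neg hik] at this
          constructor
          · intro h
            rw [if_pos h] at this
            by_contra h'
            rw [if_neg h'] at this
            norm_num at this
          · intro h
            rw [if_pos h] at this
            by_contra h'
            rw [if_neg h'] at this
            norm_num at this
      rw [hTT']


open scoped Classical in
theorem facet_count {ι : Type*} [Fintype ι] {s : ℕ} (hs : 2 ≤ s) (w : Fin s → (ι → ℝ))
    (H1 : ∑ i, w i = 0)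
    (H2 : ∀ t : Fin s → ℝ, ∑ i, t i • w i = 0 → ∀ i k : Fin s, t i = t k) :
    (polyFacets (convexHull ℝ {x : ι → ℝ | ∃ i, x = w i ∨ x = -w i})).ncard
      = {a : Fin s → ℝ | Adm a}.ncard := by
  classical
  set S : Set (ι → ℝ) := {x : ι → ℝ | ∃ i, x = w i ∨ x = -w i} with hS
  set P : Set (ι → ℝ) := convexHull ℝ S with hP
  set W : Submodule ℝ (ι → ℝ) := Submodule.span ℝ (Set.range w) with hW
  have hSW : S ⊆ (W : Set (ι → ℝ)) := by
    rintro x ⟨i, rfl | rfl⟩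
    · exact Submodule.subset_span ⟨i, rfl⟩
    · exact neg_mem (Submodule.subset_span ⟨i, rfl⟩)
  have hPW : P ⊆ (W : Set (ι → ℝ)) := convexHull_min hSW W.convex
  have hwP : ∀ i, w i ∈ P := fun i => subset_convexHull ℝ S ⟨i, Or.inl rfl⟩
  have hwP' : ∀ i, -w i ∈ P := fun i => subset_convexHull ℝ S ⟨i, Or.inr rfl⟩
  set tfin : Finset (ι → ℝ) :=
    Finset.univ.image w ∪ Finset.univ.image (fun i => -w i) with htfin
  have hSt : S = ↑tfin := by
    ext x
    simp only [hS, Set.mem_setOf_eq, htfin, Finset.coe_union, Set.mem_union, Finset.coe_image,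
      Set.mem_image, Finset.mem_coe, Finset.mem_image, Finset.mem_univ, true_and,
      Set.mem_setOf_eq, Finset.coe_univ, Set.image_univ, Set.mem_range]
    constructor
    · rintro ⟨i, rfl | rfl⟩
      · exact Or.inl ⟨i, rfl⟩
      · exact Or.inr ⟨i, rfl⟩
    · rintro (⟨i, rfl⟩ | ⟨i, rfl⟩)
      · exact ⟨i, Or.inl rfl⟩
      · exact ⟨i, Or.inr rfl⟩
  have htmem : ∀ y ∈ tfin, ∃ i, y = w i ∨ y = -w i := by
    intro y hy
    have : y ∈ S := by rw [hSt]; exact hy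
    exact this
  have htP : ∀ y ∈ tfin, y ∈ P := by
    intro y hy
    apply subset_convexHull ℝ S
    rw [hSt]
    exact hy
  have hub : ∀ (l : (ι → ℝ) →ₗ[ℝ] ℝ) (M : ℝ), (∀ i, l (w i) ≤ M) → (∀ i, -(l (w i)) ≤ M) →
      ∀ x ∈ P, l x ≤ M := by
    intro l M h1 h2
    have hsub : P ⊆ {x : ι → ℝ | l x ≤ M} := by
      apply convexHull_min _ (convex_halfSpace_le ⟨l.map_add, l.map_smul⟩ M)
      rintro x ⟨i, rfl | rfl⟩
      · exact h1 i
      · simpa using h2 i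
    exact fun x hx => hsub hx
  have hrep : ∀ x ∈ P, ∃ μ : (ι → ℝ) → ℝ, (∀ y ∈ tfin, 0 ≤ μ y) ∧ ∑ y ∈ tfin, μ y = 1 ∧
      ∑ y ∈ tfin, μ y • y = x := by
    intro x hx
    rw [hP, hSt, Finset.mem_convexHull] at hx
    obtain ⟨μ, h0, h1, h2⟩ := hx
    exact ⟨μ, h0, h1, by rw [← Finset.centerMass_eq_of_sum_1 _ _ h1] at *; exact h2⟩
  have hex : ∀ a : Fin s → ℝ, Adm a → ∃ c : (ι → ℝ) →ₗ[ℝ] ℝ, ∀ i, c (w i) = a i := by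
    intro a ha
    exact exists_functional w H2 a ha.2.1 (by omega)
  choose! c hc using hex
  set F : (Fin s → ℝ) → Set (ι → ℝ) := fun a => {x ∈ P | c a x = 1} with hF
  -- main properties of F a for admissible a
  have hmain : ∀ a, Adm a → (F a).Nonempty ∧ IsExposed ℝ P (F a) ∧ F a ⊂ P ∧
      (∀ G, IsExposed ℝ P G → F a ⊆ G → G ⊂ P → G = F a) := by
    intro a ha
    have hca := hc a ha
    have hval := ha.1
    have hble : ∀ x ∈ P, c a x ≤ 1 := by
      apply hub
      · intro i; rw [hca]; rcases hval i with h|h|h <;> rw [h] <;> norm_num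
      · intro i; rw [hca]; rcases hval i with h|h|h <;> rw [h] <;> norm_num
    have hi0 : ∃ i, a i ≠ 0 := by
      by_contra h
      push_neg at h
      have heq : Finset.univ.filter (fun i => a i = 0) = (Finset.univ : Finset (Fin s)) :=
        Finset.filter_true_of_mem (fun i _ => h i)
      have := ha.2.2
      rw [heq, Finset.card_univ, Fintype.card_fin] at this
      omega
    obtain ⟨i0, hi0⟩ := hi0
    set p0 : ι → ℝ := a i0 • w i0 with hp0
    have hsmulP : ∀ i, a i ≠ 0 → a i • w i ∈ P ∧ -(a i • w i) ∈ P := by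
      intro i hne
      rcases hval i with h|h|h
      · rw [h, one_smul]; exact ⟨hwP i, hwP' i⟩
      · rw [h, neg_one_smul, neg_neg]; exact ⟨hwP' i, hwP i⟩
      · exact absurd h hne
    have hp0P : p0 ∈ P := (hsmulP i0 hi0).1
    have hp0P' : -p0 ∈ P := (hsmulP i0 hi0).2
    have hsmulc : ∀ i, a i ≠ 0 → c a (a i • w i) = 1 := by
      intro i hne
      rw [_root_.map_smul, smul_eq_mul, hca]
      rcases hval i with h|h|h
      · rw [h]; norm_num
      · rw [h]; norm_num
      · exact absurd h hne
    have hp0c : c a p0 = 1 := hsmulc i0 hi0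
    have hFeq : F a = {x ∈ P | ∀ y ∈ P, c a y ≤ c a x} := by
      ext x
      constructor
      · rintro ⟨hxP, hx1⟩
        exact ⟨hxP, fun y hy => le_of_le_of_eq (hble y hy) hx1.symm⟩
      · rintro ⟨hxP, hmax⟩
        refine ⟨hxP, le_antisymm (hble x hxP) ?_⟩
        have := hmax p0 hp0P
        rw [hp0c] at this
        exact this
    have hexp : IsExposed ℝ P (F a) := by
      intro _
      refine ⟨LinearMap.toContinuousLinearMap (c a), ?_⟩
      rw [hFeq]
      have hcoe : ⇑(LinearMap.toContinuousLinearMap (c a)) = ⇑(c a) :=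
        LinearMap.coe_toContinuousLinearMap' (c a)
      simp only [hcoe]
    have hproper : F a ⊂ P := by
      rw [Set.ssubset_iff_subset_ne]
      refine ⟨Set.sep_subset _ _, fun h => ?_⟩
      have : -p0 ∈ F a := by rw [h]; exact hp0P'
      have h2 := this.2
      rw [_root_.map_neg, hp0c] at h2
      norm_num at h2
    refine ⟨⟨p0, hp0P, hp0c⟩, hexp, hproper, ?_⟩
    intro G hGexp hFG hGP
    have hGne : G.Nonempty := ⟨p0, hFG ⟨hp0P, hp0c⟩⟩
    obtain ⟨l, hl⟩ := hGexp hGne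
    have hp0G : p0 ∈ G := hFG ⟨hp0P, hp0c⟩
    rw [hl] at hp0G
    set M : ℝ := l p0 with hM
    have hmaxP : ∀ y ∈ P, l y ≤ M := hp0G.2
    have hGM : ∀ x ∈ G, l x = M := by
      intro x hx
      rw [hl] at hx
      exact le_antisymm (hmaxP x hx.1) (hx.2 p0 hp0G.1)
    have hZs : ∀ i, a i ≠ 0 → l (w i) = a i * M := by
      intro i hne
      have hpi : (a i • w i) ∈ F a := ⟨(hsmulP i hne).1, hsmulc i hne⟩
      have hlv := hGM _ (hFG hpi)
      rw [_root_.map_smul, smul_eq_mul] at hlv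
      rcases hval i with h|h|h
      · rw [h] at hlv ⊢; linarith
      · rw [h] at hlv ⊢; linarith
      · exact absurd h hne
    have hlw : ∀ i, l (w i) = a i * M := by
      intro i
      by_cases hne : a i = 0
      · -- i is the unique zero position
        have huniq : ∀ k, k ≠ i → a k ≠ 0 := by
          intro k hk hk0
          have hsub : ({k, i} : Finset (Fin s)) ⊆ Finset.univ.filter (fun j => a j = 0) := by
            intro x hx
            rw [Finset.mem_insert, Finset.mem_singleton] at hx
            rw [Finset.mem_filter]
            rcases hx with rfl | rfl
            · exact ⟨Finset.mem_univ _, hk0⟩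
            · exact ⟨Finset.mem_univ _, hne⟩
          have h2 : 2 ≤ (Finset.univ.filter (fun j => a j = 0)).card := by
            have := Finset.card_le_card hsub
            rw [Finset.card_pair hk] at this
            exact this
          have := ha.2.2
          omega
        have hsum0 : ∑ k, l (w k) = 0 := by
          rw [← _root_.map_sum, H1, _root_.map_zero]
        have herase : ∑ k ∈ Finset.univ.erase i, l (w k) + l (w i) = 0 := by
          rw [Finset.sum_erase_add _ _ (Finset.mem_univ i)]
          exact hsum0
        have herase2 : ∑ k ∈ Finset.univ.erase i, l (w k)
            = (∑ k ∈ Finset.univ.erase i, a k) * M := by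
          rw [Finset.sum_mul]
          refine Finset.sum_congr rfl fun k hk => ?_
          exact hZs k (huniq k (Finset.mem_erase.mp hk).1)
        have haerase : ∑ k ∈ Finset.univ.erase i, a k = 0 := by
          have := Finset.sum_erase_add Finset.univ a (Finset.mem_univ i)
          rw [ha.2.1] at this
          rw [hne] at this
          linarith
        rw [herase2, haerase] at herase
        rw [hne]
        linarith
      · exact hZs i hne
    have hlc : ∀ x ∈ W, l x = M * c a x := by
      intro x hx
      refine Submodule.span_induction ?_ ?_ ?_ ?_ hx
      · rintro y ⟨i, rfl⟩
        rw [hlw, hca]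
        ring
      · simp
      · intro x y _ _ hx hy
        rw [_root_.map_add, _root_.map_add, hx, hy]
        ring
      · intro r x _ hx
        rw [_root_.map_smul, _root_.map_smul, smul_eq_mul, smul_eq_mul, hx]
        ring
    have hM0 : M ≠ 0 := by
      intro h0
      apply (Set.ssubset_iff_subset_ne.mp hGP).2
      rw [hl]
      ext x
      constructor
      · rintro ⟨hxP, -⟩
        exact hxP
      · intro hx
        refine ⟨hx, fun y hy => ?_⟩
        rw [hlc y (hPW hy), hlc x (hPW hx), h0]
        simp
    rw [hl]
    ext x
    constructor
    · rintro ⟨hxP, hxmax⟩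
      have hxM : l x = M := le_antisymm (hmaxP x hxP) (hxmax p0 hp0G.1)
      refine ⟨hxP, ?_⟩
      have h2 := hlc x (hPW hxP)
      rw [hxM] at h2
      have : M * 1 = M * c a x := by rw [mul_one]; exact h2
      exact (mul_left_cancel₀ hM0 this).symm
    · rintro ⟨hxP, hx1⟩
      refine ⟨hxP, fun y hy => ?_⟩
      have hxM : l x = M := by rw [hlc x (hPW hxP), hx1, mul_one]
      rw [hxM]
      exact hmaxP y hy
  -- every facet has the form F a
  have hadm_ex : ∃ a : Fin s → ℝ, Adm a := by
    obtain ⟨a, ha, -⟩ := sign_extend 1 one_pos (fun _ : Fin s => (0:ℝ))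
      (fun i => by norm_num) (by simp)
    exact ⟨a, ha⟩
  have hfacet : ∀ G ∈ polyFacets P, ∃ a, Adm a ∧ G = F a := by
    intro G hG
    obtain ⟨hGexp, hGP, hGmax⟩ := hG
    have hGne : G.Nonempty := by
      by_contra h
      rw [Set.not_nonempty_iff_eq_empty] at h
      obtain ⟨a₀, ha₀⟩ := hadm_ex
      obtain ⟨hne, he, hp, -⟩ := hmain a₀ ha₀
      have hFG := hGmax (F a₀) he (h ▸ Set.empty_subset _) hp
      rw [h] at hFG
      rw [hFG] at hne
      exact Set.not_nonempty_empty hne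
    obtain ⟨l, hl⟩ := hGexp hGne
    obtain ⟨x₀, hx₀⟩ := hGne
    have hx₀' := hx₀
    rw [hl] at hx₀'
    set M : ℝ := l x₀ with hM
    have hmaxP : ∀ y ∈ P, l y ≤ M := hx₀'.2
    have hGM : ∀ x ∈ G, l x = M := by
      intro x hx
      rw [hl] at hx
      exact le_antisymm (hmaxP x hx.1) (hx.2 x₀ hx₀'.1)
    have hlnonzero : ∃ i, l (w i) ≠ 0 := by
      by_contra h
      push_neg at h
      have hl0 : ∀ x ∈ W, l x = 0 := by
        intro x hx
        refine Submodule.span_induction ?_ ?_ ?_ ?_ hx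
        · rintro y ⟨i, rfl⟩; exact h i
        · simp
        · intro x y _ _ hx hy; rw [_root_.map_add, hx, hy, add_zero]
        · intro r x _ hx; rw [_root_.map_smul, smul_eq_mul, hx, mul_zero]
      apply (Set.ssubset_iff_subset_ne.mp hGP).2
      rw [hl]
      ext x
      constructor
      · rintro ⟨hxP, -⟩; exact hxP
      · intro hx
        exact ⟨hx, fun y hy => by rw [hl0 y (hPW hy), hl0 x (hPW hx)]⟩
    obtain ⟨i₁, hi₁⟩ := hlnonzero
    have hbound : ∀ i, |l (w i)| ≤ M := by
      intro i
      rw [abs_le]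
      constructor
      · have := hmaxP _ (hwP' i)
        rw [_root_.map_neg] at this
        linarith
      · exact hmaxP _ (hwP i)
    have hMpos : 0 < M := lt_of_lt_of_le (abs_pos.mpr hi₁) (hbound i₁)
    have hsum0 : ∑ i, l (w i) = 0 := by rw [← _root_.map_sum, H1, _root_.map_zero]
    obtain ⟨a, haAdm, hacond⟩ := sign_extend M hMpos (fun i => l (w i)) hbound hsum0
    have hGF : G ⊆ F a := by
      intro x hx
      have hxP : x ∈ P := by rw [hl] at hx; exact hx.1
      have hxM : l x = M := hGM x hx
      obtain ⟨μ, hμ0, hμ1, hμx⟩ := hrep x hxP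
      have key : ∀ y ∈ tfin, μ y * (M - l y) = 0 := by
        have e1 : ∑ y ∈ tfin, μ y * M = M := by rw [← Finset.sum_mul, hμ1, one_mul]
        have e2 : ∑ y ∈ tfin, μ y * l y = l x := by
          rw [← hμx, _root_.map_sum]
          exact Finset.sum_congr rfl fun y _ => by rw [_root_.map_smul, smul_eq_mul]
        have hsumz : ∑ y ∈ tfin, μ y * (M - l y) = 0 := by
          have : ∀ y ∈ tfin, μ y * (M - l y) = μ y * M - μ y * l y :=
            fun y _ => by ring
          rw [Finset.sum_congr rfl this, Finset.sum_sub_distrib, e1, e2, hxM, sub_self]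
        intro y hy
        refine (Finset.sum_eq_zero_iff_of_nonneg fun y hy => ?_).mp hsumz y hy
        exact mul_nonneg (hμ0 y hy) (sub_nonneg.mpr (hmaxP y (htP y hy)))
      have hcay : ∀ y ∈ tfin, μ y ≠ 0 → c a y = 1 := by
        intro y hy hμ
        have hyM : l y = M := by
          rcases mul_eq_zero.mp (key y hy) with h | h
          · exact absurd h hμ
          · linarith
        obtain ⟨i, hi | hi⟩ := htmem y hy
        · have : l (w i) = M := by rw [← hi]; exact hyM
          have ha1 : a i = 1 := (hacond i).1 this
          rw [hi, hc a haAdm, ha1]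
        · have : l (w i) = -M := by
            have h2 : l (-w i) = M := by rw [← hi]; exact hyM
            rw [_root_.map_neg] at h2
            linarith
          have ha1 : a i = -1 := (hacond i).2 this
          rw [hi, _root_.map_neg, hc a haAdm, ha1]
          norm_num
      refine ⟨hxP, ?_⟩
      rw [← hμx, _root_.map_sum]
      have hterm : ∀ y ∈ tfin, c a (μ y • y) = μ y := by
        intro y hy
        rw [_root_.map_smul, smul_eq_mul]
        rcases eq_or_ne (μ y) 0 with h | h
        · rw [h, zero_mul]
        · rw [hcay y hy h, mul_one]
      rw [Finset.sum_congr rfl hterm, hμ1]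
    obtain ⟨-, he, hp, -⟩ := hmain a haAdm
    exact ⟨a, haAdm, (hGmax (F a) he hGF hp).symm⟩
  -- injectivity
  have himp : ∀ (a b : Fin s → ℝ), Adm a → Adm b → F a = F b →
      ∀ i, (a i = 1 → b i = 1) ∧ (a i = -1 → b i = -1) := by
    intro a b ha hb hab i
    constructor
    · intro h1
      have hmem : w i ∈ F a := ⟨hwP i, by rw [hc a ha, h1]⟩
      rw [hab] at hmem
      have hbc := hmem.2
      rw [hc b hb] at hbc
      rcases hb.1 i with h|h|h
      · exact h
      · rw [h] at hbc; norm_num at hbc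
      · rw [h] at hbc; norm_num at hbc
    · intro h1
      have hmem : -w i ∈ F a := ⟨hwP' i, by rw [_root_.map_neg, hc a ha, h1]; norm_num⟩
      rw [hab] at hmem
      have hbc := hmem.2
      rw [_root_.map_neg, hc b hb] at hbc
      rcases hb.1 i with h|h|h
      · rw [h] at hbc; norm_num at hbc
      · exact h
      · rw [h] at hbc; norm_num at hbc
  have hinj : Set.InjOn F {a : Fin s → ℝ | Adm a} := by
    intro a ha b hb hab
    funext i
    rcases ha.1 i with h|h|h
    · rw [h, (himp a b ha hb hab i).1 h]
    · rw [h, (himp a b ha hb hab i).2 h]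
    · rcases hb.1 i with h'|h'|h'
      · have := (himp b a hb ha hab.symm i).1 h'
        rw [h] at this
        norm_num at this
      · have := (himp b a hb ha hab.symm i).2 h'
        rw [h] at this
        norm_num at this
      · rw [h, h']
  have hPF : polyFacets P = F '' {a : Fin s → ℝ | Adm a} := by
    ext G
    constructor
    · intro hG
      obtain ⟨a, ha, hGa⟩ := hfacet G hG
      exact ⟨a, ha, hGa.symm⟩
    · rintro ⟨a, ha, rfl⟩
      obtain ⟨-, he, hp, hm⟩ := hmain a ha
      exact ⟨he, hp, hm⟩
  rw [hPF, Set.ncard_image_of_injOn hinj]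

lemma B_pm {n : ℕ} (K : SC n) (j : ℕ) (τ : K.fdex j) (σ : K.fdex (j+1)) (h : τ.1 ⊆ σ.1) :
    K.B j τ σ = 1 ∨ K.B j τ σ = -1 := by
  unfold SC.B bEntry
  rw [if_pos ⟨h, by rw [σ.2.2, τ.2.2]⟩]
  have hcard : (σ.1 \ τ.1).card = 1 := by
    rw [Finset.card_sdiff_of_subset h, σ.2.2, τ.2.2]
    omega
  obtain ⟨v, hv⟩ := Finset.card_eq_one.mp hcard
  rw [hv, Finset.sum_singleton]
  rcases Nat.even_or_odd ((σ.1.filter fun w => w < v).card) with h|h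
  · left; exact Even.neg_one_pow h
  · right; exact Odd.neg_one_pow h

lemma B_zero {n : ℕ} (K : SC n) (j : ℕ) (τ : K.fdex j) (σ : K.fdex (j+1))
    (h : ¬ τ.1 ⊆ σ.1) : K.B j τ σ = 0 := by
  unfold SC.B bEntry
  rw [if_neg (fun hh => h hh.1)]

/-- Let `Δ` be a connected closed orientable `d`-dimensional
pseudomanifold (`d = j+1 ≥ 1`) with `s` facets. Then the number of facets of `P_Δ`
is `C(2m,m)` if `s = 2m` and `(2m+1)·C(2m,m)` if `s = 2m+1`. -/
theorem stmt9 (n j s : ℕ) (K : SC n) (hdim : K.dimIs (j + 1)) (hpure : K.pure (j + 1))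
    (hsc : K.StronglyConnected j)
    (hclosed : ∀ τ : K.fdex j, K.ridgeDeg j τ = 2)
    (horient : ∃ z : K.fdex (j + 1) → ℤ, z ≠ 0 ∧ (K.B j).mulVec z = 0 ∧
      ∀ w : K.fdex (j + 1) → ℤ, (K.B j).mulVec w = 0 → ∃ c : ℤ, w = c • z)
    (hs : Fintype.card (K.fdex (j + 1)) = s) :
    (polyFacets (symPoly (K.B j))).ncard =
      if s % 2 = 0 then Nat.choose s (s / 2)
      else s * Nat.choose (s - 1) ((s - 1) / 2) := by
  classical
  obtain ⟨z, hz0, hzker, -⟩ := horient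
  -- a ridge exists, hence s ≥ 2
  obtain ⟨σF, hσF, hσFcard⟩ := hdim.2
  obtain ⟨x0, hx0⟩ := K.face_nonempty σF hσF
  have hτmem : σF.erase x0 ∈ K.faces := by
    apply K.down_closed σF hσF _ (Finset.erase_subset _ _)
    rw [← Finset.card_pos, Finset.card_erase_of_mem hx0, hσFcard]
    omega
  set τ₀ : K.fdex j := ⟨σF.erase x0, hτmem,
    by rw [Finset.card_erase_of_mem hx0, hσFcard]; omega⟩ with hτ₀
  have hs2 : 2 ≤ s := by
    have h2 := hclosed τ₀
    unfold SC.ridgeDeg at h2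
    calc 2 = _ := h2.symm
    _ ≤ (Finset.univ : Finset (K.fdex (j+1))).card := Finset.card_filter_le _ _
    _ = s := by rw [Finset.card_univ, hs]
  set e : K.fdex (j+1) ≃ Fin s := Fintype.equivFinOfCardEq hs with he
  set Z : K.fdex (j+1) → ℝ := fun σ => (z σ : ℝ) with hZ
  have hZker : ∀ τ, ∑ ρ, (K.B j τ ρ : ℝ) * Z ρ = 0 := by
    intro τ
    have h0 := congrFun hzker τ
    simp only [Matrix.mulVec, dotProduct, Pi.zero_apply] at h0
    have h1 := congrArg (fun r : ℤ => (r : ℝ)) h0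
    push_cast at h1
    exact h1
  -- the two-facets-per-ridge relation
  have hpair : ∀ σ σ' : K.fdex (j+1), σ ≠ σ' → (σ.1 ∩ σ'.1).card = j + 1 →
      ∃ A Bc : ℤ, (A = 1 ∨ A = -1) ∧ (Bc = 1 ∨ Bc = -1) ∧
        ∀ u : K.fdex (j+1) → ℝ, (∀ τ, ∑ ρ, (K.B j τ ρ : ℝ) * u ρ = 0) →
          (A:ℝ) * u σ + (Bc:ℝ) * u σ' = 0 := by
    intro σ σ' hne hcard
    have hmemτ : σ.1 ∩ σ'.1 ∈ K.faces :=
      K.down_closed σ.1 σ.2.1 _ Finset.inter_subset_left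
        (Finset.card_pos.mp (by rw [hcard]; omega))
    set τ : K.fdex j := ⟨σ.1 ∩ σ'.1, hmemτ, hcard⟩ with hτ
    have hσsub : τ.1 ⊆ σ.1 := Finset.inter_subset_left
    have hσ'sub : τ.1 ⊆ σ'.1 := Finset.inter_subset_right
    have hfilt : Finset.univ.filter (fun ρ : K.fdex (j+1) => τ.1 ⊆ ρ.1) = {σ, σ'} := by
      symm
      apply Finset.eq_of_subset_of_card_le
      · intro ρ hρ
        rw [Finset.mem_insert, Finset.mem_singleton] at hρ
        rw [Finset.mem_filter]
        rcases hρ with rfl | rfl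
        · exact ⟨Finset.mem_univ _, hσsub⟩
        · exact ⟨Finset.mem_univ _, hσ'sub⟩
      · have h2 := hclosed τ
        unfold SC.ridgeDeg at h2
        rw [h2, Finset.card_pair hne]
    refine ⟨K.B j τ σ, K.B j τ σ', B_pm K j τ σ hσsub, B_pm K j τ σ' hσ'sub, ?_⟩
    intro u hu
    have h0 := hu τ
    rw [← Finset.sum_subset (Finset.subset_univ ({σ, σ'} : Finset _)) ?_] at h0
    · rw [Finset.sum_insert (by simp [hne]), Finset.sum_singleton] at h0
      exact h0
    · intro ρ _ hρ
      have hnsub : ¬ τ.1 ⊆ ρ.1 := by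
        intro hsub
        apply hρ
        have hmem2 : ρ ∈ Finset.univ.filter (fun ρ : K.fdex (j+1) => τ.1 ⊆ ρ.1) :=
          Finset.mem_filter.mpr ⟨Finset.mem_univ _, hsub⟩
        rw [hfilt] at hmem2
        exact hmem2
      rw [B_zero K j τ ρ hnsub]
      norm_num
  -- propagate nonvanishing and absolute value of z along the dual graph
  obtain ⟨σw, hσw⟩ : ∃ σw, z σw ≠ 0 := by
    by_contra h
    push_neg at h
    exact hz0 (funext fun σ => h σ)
  have hzprop : ∀ σ, Z σ ≠ 0 ∧ |Z σ| = |Z σw| := by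
    intro σ
    have hpath := hsc σw σ
    induction hpath with
    | refl => exact ⟨by simpa [hZ] using (Int.cast_ne_zero (α := ℝ)).mpr hσw, rfl⟩
    | @tail b c hab hedge ih =>
        by_cases hbc : b = c
        · rw [← hbc]; exact ih
        · obtain ⟨A, Bc, hA, hBc, hrel⟩ := hpair b c hbc hedge
          have hzrel := hrel Z hZker
          have hcc : Z c = Z b ∨ Z c = -Z b := by
            rcases hA with rfl | rfl <;> rcases hBc with rfl | rfl <;>
              push_cast at hzrel <;> [right; left; left; right] <;> linarith
          rcases hcc with h | h
          · rw [h]; exact ih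
          · rw [h]
            refine ⟨fun hh => ih.1 (by linarith), by rw [abs_neg]; exact ih.2⟩
  have hZw0 : Z σw ≠ 0 := (hzprop σw).1
  set cst : ℝ := |Z σw| with hcst
  have hcst0 : cst ≠ 0 := fun h => hZw0 (abs_eq_zero.mp h)
  set ε : K.fdex (j+1) → ℝ := fun σ => if 0 < Z σ then 1 else -1 with hε
  have hεpm : ∀ σ, ε σ = 1 ∨ ε σ = -1 := fun σ => by
    by_cases h : 0 < Z σ
    · left; simp [hε, h]
    · right; simp [hε, h]
  have hZe : ∀ σ, Z σ = cst * ε σ := by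
    intro σ
    rw [hε]
    simp only
    split_ifs with h
    · rw [mul_one, ← (hzprop σ).2]
      exact (abs_of_pos h).symm
    · have hlt : Z σ < 0 := lt_of_le_of_ne (not_lt.mp h) (hzprop σ).1
      rw [← (hzprop σ).2, abs_of_neg hlt]
      ring
  have hBe : ∀ τ, ∑ ρ, (K.B j τ ρ:ℝ) * ε ρ = 0 := by
    intro τ
    have h0 := hZker τ
    have h1 : ∑ ρ, (K.B j τ ρ:ℝ) * Z ρ = cst * ∑ ρ, (K.B j τ ρ:ℝ) * ε ρ := by
      rw [Finset.mul_sum]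
      exact Finset.sum_congr rfl fun ρ _ => by rw [hZe ρ]; ring
    rw [h1] at h0
    rcases mul_eq_zero.mp h0 with h | h
    · exact absurd h hcst0
    · exact h
  set w : Fin s → (K.fdex j → ℝ) :=
    fun i τ => ε (e.symm i) * (K.B j τ (e.symm i) : ℝ) with hw
  have H1 : ∑ i, w i = 0 := by
    funext τ
    rw [Finset.sum_apply]
    have h1 : ∑ i, w i τ = ∑ ρ, ε ρ * (K.B j τ ρ : ℝ) :=
      Equiv.sum_comp e.symm (fun ρ => ε ρ * (K.B j τ ρ : ℝ))
    rw [h1]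
    have h2 : ∑ ρ, ε ρ * (K.B j τ ρ : ℝ) = ∑ ρ, (K.B j τ ρ : ℝ) * ε ρ :=
      Finset.sum_congr rfl fun ρ _ => mul_comm _ _
    rw [h2, hBe τ]
    rfl
  have H2 : ∀ t : Fin s → ℝ, ∑ i, t i • w i = 0 → ∀ i k : Fin s, t i = t k := by
    intro t ht
    set u : K.fdex (j+1) → ℝ := fun ρ => t (e ρ) * ε ρ with hu
    have huker : ∀ τ, ∑ ρ, (K.B j τ ρ:ℝ) * u ρ = 0 := by
      intro τ
      have h0 := congrFun ht τ
      rw [Finset.sum_apply, Pi.zero_apply] at h0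
      have h1 : ∑ i, (t i • w i) τ = ∑ ρ, (K.B j τ ρ:ℝ) * u ρ := by
        rw [← Equiv.sum_comp e.symm (fun ρ => (K.B j τ ρ:ℝ) * u ρ)]
        refine Finset.sum_congr rfl fun i _ => ?_
        rw [Pi.smul_apply, smul_eq_mul, hw, hu]
        simp only [Equiv.apply_symm_apply]
        ring
      rw [h1] at h0
      exact h0
    have hQ : ∀ ρ, u ρ * Z σw = u σw * Z ρ := by
      intro ρ
      have hpath := hsc σw ρ
      induction hpath with
      | refl => ring
      | @tail b c hab hedge ih =>
          by_cases hbc : b = c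
          · rw [← hbc]; exact ih
          · obtain ⟨A, Bc, hA, hBc, hrel⟩ := hpair b c hbc hedge
            have h1 := hrel Z hZker
            have h2 := hrel u huker
            rcases hA with rfl | rfl <;> rcases hBc with rfl | rfl <;>
              push_cast at h1 h2
            · have e1 : u c = -u b := by linarith
              have e2 : Z c = -Z b := by linarith
              rw [e1, e2]; ring_nf; ring_nf at ih; linarith
            · have e1 : u c = u b := by linarith
              have e2 : Z c = Z b := by linarith
              rw [e1, e2]; exact ih
            · have e1 : u c = u b := by linarith
              have e2 : Z c = Z b := by linarith
              rw [e1, e2]; exact ih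
            · have e1 : u c = -u b := by linarith
              have e2 : Z c = -Z b := by linarith
              rw [e1, e2]; ring_nf; ring_nf at ih; linarith
    have hconst : ∀ ρ, t (e ρ) * Z σw = u σw * cst := by
      intro ρ
      have h1 := hQ ρ
      rw [hZe ρ] at h1
      have h2 : (t (e ρ) * ε ρ) * Z σw = u σw * (cst * ε ρ) := h1
      rcases hεpm ρ with h | h <;> rw [h] at h2
      · linarith
      · ring_nf at h2 ⊢
        linarith
    intro i k
    have hi := hconst (e.symm i)
    have hk := hconst (e.symm k)
    rw [Equiv.apply_symm_apply] at hi hk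
    have h3 : t i * Z σw = t k * Z σw := by rw [hi, hk]
    exact mul_right_cancel₀ hZw0 h3
  have hset : colsPM (K.B j) = {x : K.fdex j → ℝ | ∃ i : Fin s, x = w i ∨ x = -w i} := by
    ext x
    unfold colsPM
    simp only [Set.mem_setOf_eq]
    constructor
    · rintro ⟨ρ, h | h⟩
      · refine ⟨e ρ, ?_⟩
        rcases hεpm ρ with hh | hh
        · left
          rw [h]
          funext τ
          rw [hw]
          simp only [Equiv.symm_apply_apply, hh, one_mul]
        · right
          rw [h]
          funext τ
          rw [Pi.neg_apply, hw]
          simp only [Equiv.symm_apply_apply, hh]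
          ring
      · refine ⟨e ρ, ?_⟩
        rcases hεpm ρ with hh | hh
        · right
          rw [h]
          funext τ
          rw [Pi.neg_apply, hw]
          simp only [Equiv.symm_apply_apply, hh, one_mul]
        · left
          rw [h]
          funext τ
          rw [hw]
          simp only [Equiv.symm_apply_apply, hh]
          ring
    · rintro ⟨i, h | h⟩
      · refine ⟨e.symm i, ?_⟩
        rcases hεpm (e.symm i) with hh | hh
        · left
          rw [h]
          funext τ
          rw [hw]
          simp only [hh, one_mul]
        · right
          rw [h]
          funext τ
          rw [hw]
          simp only [hh]
          ring
      · refine ⟨e.symm i, ?_⟩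
        rcases hεpm (e.symm i) with hh | hh
        · right
          rw [h]
          funext τ
          rw [Pi.neg_apply, hw]
          simp only [hh, one_mul]
        · left
          rw [h]
          funext τ
          rw [Pi.neg_apply, hw]
          simp only [hh]
          ring
  unfold symPoly
  rw [hset, facet_count hs2 w H1 H2, adm_card s]
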